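/- arXiv:2403.02552 — 3 statements merged into one kernel-verified Lean document; each statement's English description precedes it below -/
import Mathlib

section
/- Let m be an odd positive integer and D_{2m} the dihedral group with 2m elements. For any positive integer ℓ, the number of conjugation orbits of commuting ℓ-tuples of elements of D_{2m} equals (m^ℓ + 2^{ℓ+1} − 1)/2. -/
/-- Simultaneous conjugation on commuting `ℓ`-tuples in a group `G`. -/
def conjRel (G : Type*) [Group G] (ℓ : ℕ)
    (s t : {f : Fin ℓ → G // ∀ i j, Commute (f i) (f j)}) : Prop :=
  ∃ g : G, ∀ i, t.1 i = g * s.1 i * g⁻¹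

section Involution

/-- Counting the quotient of a finite type by an involution. -/
lemma two_mul_card_quot_invol {A : Type*} [Finite A] (σ : A → A)
    (hσ : Function.Involutive σ) (r : A → A → Prop)
    (hr : ∀ a b, r a b ↔ (b = a ∨ b = σ a)) :
    2 * Nat.card (Quot r) = Nat.card A + Nat.card {a : A // σ a = a} := by
  classical
  have hequiv : Equivalence r := by
    constructor
    · intro a; exact (hr a a).2 (Or.inl rfl)
    · intro a b h
      rcases (hr a b).1 h with h | h
      · exact (hr b a).2 (Or.inl h.symm)
      · exact (hr b a).2 (Or.inr (by rw [h, hσ]))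
    · intro a b c h1 h2
      rcases (hr a b).1 h1 with h1 | h1 <;> rcases (hr b c).1 h2 with h2 | h2 <;>
        apply (hr a c).2
      · exact Or.inl (h2.trans h1)
      · exact Or.inr (by rw [h2, h1])
      · exact Or.inr (h2.trans h1)
      · exact Or.inl (by rw [h2, h1, hσ])
  have key : ∀ a b : A, Quot.mk r a = Quot.mk r b ↔ (b = a ∨ b = σ a) := by
    intro a b
    rw [Quot.eq, hequiv.eqvGen_iff, hr]
  haveI : Finite (Quot r) := Finite.of_surjective (Quot.mk r) Quot.mk_surjective
  haveI := Fintype.ofFinite A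
  haveI := Fintype.ofFinite (Quot r)
  haveI := Fintype.ofFinite {a : A // σ a = a}
  have hfib : ∀ q : Quot r,
      (Finset.univ.filter fun a : A => Quot.mk r a = q).card
        + (Finset.univ.filter fun a : {x : A // σ x = x} => Quot.mk r a.1 = q).card = 2 := by
    intro q
    induction q using Quot.ind with
    | _ b =>
      by_cases hb : σ b = b
      · have h1 : (Finset.univ.filter fun a : A => Quot.mk r a = Quot.mk r b) = {b} := by
          ext a
          simp only [Finset.mem_filter, Finset.mem_univ, true_and, Finset.mem_singleton, key]
          constructor
          · rintro (rfl | h)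
            · rfl
            · have h2 := congrArg σ h
              rw [hσ, hb] at h2
              exact h2.symm
          · rintro rfl; exact Or.inl rfl
        have h2 : (Finset.univ.filter fun a : {x : A // σ x = x} =>
            Quot.mk r a.1 = Quot.mk r b) = {⟨b, hb⟩} := by
          ext a
          simp only [Finset.mem_filter, Finset.mem_univ, true_and, Finset.mem_singleton, key]
          constructor
          · rintro (h | h)
            · exact Subtype.ext h.symm
            · refine Subtype.ext ?_
              show (a : A) = b
              rw [h, a.2]
          · rintro rfl; exact Or.inl rfl
        rw [h1, h2]; simp
      · have h1 : (Finset.univ.filter fun a : A => Quot.mk r a = Quot.mk r b)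
            = {b, σ b} := by
          ext a
          simp only [Finset.mem_filter, Finset.mem_univ, true_and, Finset.mem_insert,
            Finset.mem_singleton, key]
          constructor
          · rintro (rfl | h)
            · exact Or.inl rfl
            · have h2 := congrArg σ h
              rw [hσ] at h2
              exact Or.inr h2.symm
          · rintro (rfl | rfl)
            · exact Or.inl rfl
            · exact Or.inr (hσ b).symm
        have h2 : (Finset.univ.filter fun a : {x : A // σ x = x} =>
            Quot.mk r a.1 = Quot.mk r b) = ∅ := by
          ext a
          simp only [Finset.mem_filter, Finset.mem_univ, true_and, Finset.notMem_empty,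
            iff_false, key]
          rintro (h | h)
          · rw [h] at hb; exact hb a.2
          · rw [h, hσ] at hb; exact hb a.2.symm
        rw [h1, h2]
        rw [Finset.card_pair (fun h => hb h.symm)]
        simp
  have hA : Fintype.card A
      = ∑ q : Quot r, (Finset.univ.filter fun a : A => Quot.mk r a = q).card := by
    rw [← Finset.card_univ]
    exact Finset.card_eq_sum_card_fiberwise (fun x _ => Finset.mem_univ _)
  have hF : Fintype.card {a : A // σ a = a}
      = ∑ q : Quot r,
        (Finset.univ.filter fun a : {x : A // σ x = x} => Quot.mk r a.1 = q).card := by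
    rw [← Finset.card_univ]
    exact Finset.card_eq_sum_card_fiberwise (fun x _ => Finset.mem_univ _)
  rw [Nat.card_eq_fintype_card, Nat.card_eq_fintype_card, Nat.card_eq_fintype_card, hA, hF,
    ← Finset.sum_add_distrib]
  simp only [hfib]
  rw [Finset.sum_const, Finset.card_univ, smul_eq_mul, mul_comm]

end Involution

namespace DihedralAux

open DihedralGroup

/-- Whether an element of the dihedral group is a reflection. -/
def isRefl {n : ℕ} : DihedralGroup n → Bool
  | .r _ => false
  | .sr _ => true

/-- The rotation angle of an element (junk value `0` on reflections). -/
def toA {n : ℕ} : DihedralGroup n → ZMod n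
  | .r a => a
  | .sr _ => 0

lemma isRefl_eq_false {n : ℕ} {x : DihedralGroup n} (h : isRefl x = false) :
    x = .r (toA x) := by
  cases x with
  | r a => rfl
  | sr a => simp [isRefl] at h

lemma isRefl_eq_true {n : ℕ} {x : DihedralGroup n} (h : isRefl x = true) :
    ∃ c, x = .sr c := by
  cases x with
  | r a => simp [isRefl] at h
  | sr a => exact ⟨a, rfl⟩

lemma conj_r_r {n : ℕ} (k a : ZMod n) : r k * r a * (r k)⁻¹ = r a := by
  show r k * r a * r (-k) = r a
  rw [r_mul_r, r_mul_r]
  congr 1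
  ring

lemma conj_sr_r {n : ℕ} (k c : ZMod n) : r k * sr c * (r k)⁻¹ = sr (c - k - k) := by
  show r k * sr c * r (-k) = sr (c - k - k)
  rw [r_mul_sr, sr_mul_r]
  congr 1
  ring

lemma conj_r_sr {n : ℕ} (k a : ZMod n) : sr k * r a * (sr k)⁻¹ = r (-a) := by
  show sr k * r a * sr k = r (-a)
  rw [sr_mul_r, sr_mul_sr]
  congr 1
  ring

lemma conj_sr_sr {n : ℕ} (k c : ZMod n) : sr k * sr c * (sr k)⁻¹ = sr (k - (c - k)) := by
  show sr k * sr c * sr k = sr (k - (c - k))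
  rw [sr_mul_sr, r_mul_sr]

lemma isRefl_conj {n : ℕ} (g x : DihedralGroup n) :
    isRefl (g * x * g⁻¹) = isRefl x := by
  cases g with
  | r k =>
    cases x with
    | r a => rw [conj_r_r]
    | sr c => rw [conj_sr_r]; rfl
  | sr k =>
    cases x with
    | r a => rw [conj_r_sr]; rfl
    | sr c => rw [conj_sr_sr]; rfl

section OddFacts

variable {m : ℕ} (hodd : Odd m)

include hodd in
lemma two_isUnit : IsUnit (2 : ZMod m) := by
  have := (ZMod.isUnit_iff_coprime 2 m).mpr (Nat.coprime_two_left.mpr hodd)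
  simpa using this

include hodd in
lemma add_self_eq_zero_iff {x : ZMod m} : x + x = 0 ↔ x = 0 := by
  rw [← two_mul]
  exact (two_isUnit hodd).mul_right_eq_zero

include hodd in
lemma exists_half (c : ZMod m) : ∃ k : ZMod m, k + k = c := by
  obtain ⟨u, hu⟩ := two_isUnit hodd
  refine ⟨(u⁻¹ : (ZMod m)ˣ) * c, ?_⟩
  rw [← two_mul, ← mul_assoc, ← hu]
  simp

include hodd in
lemma commute_sr_sr {c c' : ZMod m} (h : Commute (sr c : DihedralGroup m) (sr c')) :
    c = c' := by
  have h2 := h.eq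
  simp only [sr_mul_sr, r.injEq] at h2
  have h3 : (c - c') + (c - c') = 0 := by linear_combination -h2
  exact sub_eq_zero.mp ((add_self_eq_zero_iff hodd).1 h3)

include hodd in
lemma commute_r_sr {a c : ZMod m} (h : Commute (r a : DihedralGroup m) (sr c)) :
    a = 0 := by
  have h2 := h.eq
  simp only [r_mul_sr, sr_mul_r, sr.injEq] at h2
  have h3 : a + a = 0 := by linear_combination -h2
  exact (add_self_eq_zero_iff hodd).1 h3

end OddFacts

end DihedralAux

section Main

open DihedralGroup DihedralAux

variable (m ℓ : ℕ)

/-- Commuting tuples. -/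
abbrev CT := {f : Fin ℓ → DihedralGroup m // ∀ i j, Commute (f i) (f j)}

/-- Negation relation on rotation tuples. -/
def negRel (a b : Fin ℓ → ZMod m) : Prop := b = a ∨ b = -a

/-- The classification target type. -/
abbrev Target := Quot (negRel m ℓ) ⊕ {p : Fin ℓ → Bool // p ≠ fun _ => false}

/-- The classification map. -/
noncomputable def classify (f : CT m ℓ) : Target m ℓ :=
  if h : (fun i => isRefl (f.1 i)) = (fun _ => false) then
    Sum.inl (Quot.mk _ (fun i => toA (f.1 i)))
  else
    Sum.inr ⟨fun i => isRefl (f.1 i), h⟩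

variable {m ℓ}

lemma classify_respects (s t : CT m ℓ) (h : conjRel (DihedralGroup m) ℓ s t) :
    classify m ℓ s = classify m ℓ t := by
  obtain ⟨g, hg⟩ := h
  have hpat : (fun i => isRefl (t.1 i)) = fun i => isRefl (s.1 i) := by
    funext i; rw [hg i, isRefl_conj]
  unfold classify
  by_cases hc : (fun i => isRefl (s.1 i)) = (fun _ => false)
  · rw [dif_pos hc, dif_pos (hpat.trans hc)]
    have hs : ∀ i, s.1 i = DihedralGroup.r (toA (s.1 i)) := fun i =>
      isRefl_eq_false (congrFun hc i)
    cases g with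
    | r k =>
      have hts : (fun i => toA (t.1 i)) = fun i => toA (s.1 i) := by
        funext i
        conv_lhs => rw [hg i, hs i, conj_r_r]
        rfl
      rw [hts]
      
    | sr k =>
      have hts : (fun i => toA (t.1 i)) = -(fun i => toA (s.1 i)) := by
        funext i
        conv_lhs => rw [hg i, hs i, conj_r_sr]
        rfl
      exact congrArg Sum.inl (Quot.sound (Or.inr hts))
  · rw [dif_neg hc, dif_neg (fun hh => hc (hpat ▸ hh))]
    exact congrArg Sum.inr (Subtype.ext hpat.symm)

/-- The lifted classification map on the quotient. -/
noncomputable def classifyQuot :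
    Quot (conjRel (DihedralGroup m) ℓ) → Target m ℓ :=
  Quot.lift (classify m ℓ) classify_respects

lemma tuple_struct (hodd : Odd m) (f : CT m ℓ)
    (hne : (fun i => isRefl (f.1 i)) ≠ fun _ => false) :
    ∃ c : ZMod m, ∀ i,
      f.1 i = if isRefl (f.1 i) then DihedralGroup.sr c else DihedralGroup.r 0 := by
  have hex : ∃ i0, isRefl (f.1 i0) = true := by
    by_contra hno
    push_neg at hno
    apply hne
    funext i
    simpa using hno i
  obtain ⟨i0, hi0⟩ := hex
  obtain ⟨c, hc⟩ := isRefl_eq_true hi0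
  refine ⟨c, fun i => ?_⟩
  cases hfi : isRefl (f.1 i) with
  | false =>
    have hcomm := f.2 i i0
    rw [isRefl_eq_false hfi, hc] at hcomm
    have h0 := commute_r_sr hodd hcomm
    simp only [hfi, Bool.false_eq_true, if_false]
    rw [isRefl_eq_false hfi, h0]
  | true =>
    obtain ⟨c', hc'⟩ := isRefl_eq_true hfi
    have hcomm := f.2 i i0
    rw [hc', hc] at hcomm
    rw [commute_sr_sr hodd hcomm] at hc'
    simp [hfi, hc']

lemma negRel_equivalence : Equivalence (negRel m ℓ) := by
  constructor
  · intro a; exact Or.inl rfl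
  · intro a b h
    rcases h with h | h
    · exact Or.inl h.symm
    · exact Or.inr (by rw [h, neg_neg])
  · intro a b c h1 h2
    rcases h1 with h1 | h1 <;> rcases h2 with h2 | h2
    · exact Or.inl (h2.trans h1)
    · exact Or.inr (by rw [h2, h1])
    · exact Or.inr (h2.trans h1)
    · exact Or.inl (by rw [h2, h1, neg_neg])

lemma negRel_key (a b : Fin ℓ → ZMod m) :
    Quot.mk (negRel m ℓ) a = Quot.mk (negRel m ℓ) b ↔ negRel m ℓ a b := by
  rw [Quot.eq, (negRel_equivalence (m := m) (ℓ := ℓ)).eqvGen_iff]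

lemma classify_injective (hodd : Odd m) (s t : CT m ℓ)
    (h : classify m ℓ s = classify m ℓ t) : conjRel (DihedralGroup m) ℓ s t := by
  unfold classify at h
  by_cases hcs : (fun i => isRefl (s.1 i)) = (fun _ => false) <;>
    by_cases hct : (fun i => isRefl (t.1 i)) = (fun _ => false)
  · rw [dif_pos hcs, dif_pos hct] at h
    replace h := Sum.inl_injective h
    have hs : ∀ i, s.1 i = DihedralGroup.r (toA (s.1 i)) := fun i =>
      isRefl_eq_false (congrFun hcs i)
    have ht : ∀ i, t.1 i = DihedralGroup.r (toA (t.1 i)) := fun i =>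
      isRefl_eq_false (congrFun hct i)
    rcases (negRel_key _ _).1 h with heq | heq
    · refine ⟨1, fun i => ?_⟩
      rw [one_mul, inv_one, mul_one, hs i, ht i, congrFun heq i]
    · refine ⟨DihedralGroup.sr 0, fun i => ?_⟩
      conv_rhs => rw [hs i, conj_r_sr]
      rw [ht i, congrFun heq i]
      rfl
  · rw [dif_pos hcs, dif_neg hct] at h
    exact absurd h (fun hh => by simp at hh)
  · rw [dif_neg hcs, dif_pos hct] at h
    exact absurd h (fun hh => by simp at hh)
  · rw [dif_neg hcs, dif_neg hct] at h
    replace h := congrArg Subtype.val (Sum.inr_injective h)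
    have hpat : (fun i => isRefl (s.1 i)) = fun i => isRefl (t.1 i) := h
    obtain ⟨c, hcs'⟩ := tuple_struct hodd s hcs
    obtain ⟨c', hct'⟩ := tuple_struct hodd t hct
    obtain ⟨k, hk⟩ := exists_half hodd (c - c')
    refine ⟨DihedralGroup.r k, fun i => ?_⟩
    rw [hct' i, hcs' i, ← congrFun hpat i]
    cases hfi : isRefl (s.1 i) with
    | false =>
      simp only [Bool.false_eq_true, if_false]
      rw [conj_r_r]
    | true =>
      simp only [if_true]
      rw [conj_sr_r]
      congr 1
      have : c - k - k = c - (k + k) := by ring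
      rw [this, hk]
      ring

lemma classifyQuot_bijective (hodd : Odd m) :
    Function.Bijective (classifyQuot : Quot (conjRel (DihedralGroup m) ℓ) → Target m ℓ) := by
  constructor
  · intro x y
    induction x using Quot.ind with
    | _ s =>
      induction y using Quot.ind with
      | _ t =>
        intro h
        exact Quot.sound (classify_injective hodd s t h)
  · intro x
    cases x with
    | inl q =>
      induction q using Quot.ind with
      | _ a =>
        refine ⟨Quot.mk _ ⟨fun i => DihedralGroup.r (a i), fun i j => ?_⟩, ?_⟩
        · show DihedralGroup.r (a i) * DihedralGroup.r (a j)
            = DihedralGroup.r (a j) * DihedralGroup.r (a i)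
          rw [r_mul_r, r_mul_r, add_comm]
        · show classify m ℓ _ = _
          unfold classify
          exact dif_pos rfl
    | inr p =>
      obtain ⟨p, hp⟩ := p
      refine ⟨Quot.mk _ ⟨fun i => if p i then DihedralGroup.sr 0 else DihedralGroup.r 0,
        fun i j => ?_⟩, ?_⟩
      · cases hi : p i <;> cases hj : p j <;> simp only [hi, hj, if_pos rfl,
          if_neg Bool.false_ne_true]
        · exact Commute.refl _
        · exact Commute.one_left _
        · exact Commute.one_right _
        · exact Commute.refl _
      · show classify m ℓ _ = _
        have hpat : (fun i => isRefl (if p i then DihedralGroup.sr (0 : ZMod m)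
            else DihedralGroup.r 0)) = p := by
          funext i
          cases hi : p i <;> simp [hi, isRefl, -DihedralGroup.r_zero]
        unfold classify
        rw [dif_neg (by rw [hpat]; exact hp)]
        exact congrArg Sum.inr (Subtype.ext hpat)

end Main

/-- For `m` odd, the number of conjugation orbits of commuting `ℓ`-tuples of elements of the
dihedral group `D_{2m}` equals `(m^ℓ + 2^(ℓ+1) - 1)/2`. -/
theorem card_commuting_tuples_orbits_dihedral_odd (m : ℕ) (hm : 0 < m) (hodd : Odd m)
    (ℓ : ℕ) (hℓ : 1 ≤ ℓ) :
    2 * Nat.card (Quot (conjRel (DihedralGroup m) ℓ)) = m ^ ℓ + 2 ^ (ℓ + 1) - 1 := by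
  classical
  haveI : NeZero m := ⟨hm.ne'⟩
  rw [Nat.card_eq_of_bijective _ (classifyQuot_bijective hodd)]
  haveI : Finite (Quot (negRel m ℓ)) := Finite.of_surjective _ Quot.mk_surjective
  have hT : Nat.card (Target m ℓ)
      = Nat.card (Quot (negRel m ℓ)) + Nat.card {p : Fin ℓ → Bool // p ≠ fun _ => false} :=
    Nat.card_sum
  have hQ1 : 2 * Nat.card (Quot (negRel m ℓ)) = m ^ ℓ + 1 := by
    rw [two_mul_card_quot_invol (fun a => -a) (fun a => neg_neg a) (negRel m ℓ)
      (fun a b => Iff.rfl)]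
    have hfix : Nat.card {a : Fin ℓ → ZMod m // -a = a} = 1 := by
      have hiff : ∀ a : Fin ℓ → ZMod m, -a = a ↔ a = 0 := by
        intro a
        constructor
        · intro h
          funext i
          have h1 := congrFun h i
          simp only [Pi.neg_apply] at h1
          have h2 : a i + a i = 0 := by linear_combination -h1
          exact (DihedralAux.add_self_eq_zero_iff hodd).1 h2
        · rintro rfl; simp
      rw [Nat.card_congr (Equiv.subtypeEquivRight hiff), Nat.card_eq_fintype_card,
        Fintype.card_subtype_eq]
    rw [hfix, Nat.card_eq_fintype_card]
    simp [Fintype.card_fun, ZMod.card]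
  have hP : Nat.card {p : Fin ℓ → Bool // p ≠ fun _ => false} = 2 ^ ℓ - 1 := by
    rw [Nat.card_eq_fintype_card]
    have := Fintype.card_subtype_compl (fun p : Fin ℓ → Bool => p = fun _ => false)
    rw [Fintype.card_subtype_eq] at this
    rw [this]
    simp [Fintype.card_fun]
  rw [hT, hP]
  have h2l : 1 ≤ 2 ^ ℓ := Nat.one_le_two_pow
  have hpow : 2 ^ (ℓ + 1) = 2 * 2 ^ ℓ := by ring
  omega
end

section
/- Let m be an even positive integer and D_{2m} the dihedral group with 2m elements. For any positive integer ℓ, the number of conjugation orbits of commuting ℓ-tuples of elements of D_{2m} equals (m^ℓ + 2^ℓ(2^{ℓ+1} − 1))/2. -/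
namespace CTOD
open DihedralGroup

variable {m ℓ : ℕ}

def half (m : ℕ) : ZMod m := ((m / 2 : ℕ) : ZMod m)

theorem half_add_half (heven : Even m) : half m + half m = 0 := by
  obtain ⟨t, ht⟩ := heven
  have h2 : m / 2 = t := by omega
  rw [half, h2, ← Nat.cast_add, show t + t = m from ht.symm, ZMod.natCast_self]

theorem half_ne_zero (hm : 0 < m) (heven : Even m) : half m ≠ 0 := by
  obtain ⟨t, ht⟩ := heven
  have h2 : m / 2 = t := by omega
  rw [half, h2, Ne, ZMod.natCast_eq_zero_iff]
  intro hdvd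
  have := Nat.le_of_dvd (by omega) hdvd
  omega

theorem neg_half (heven : Even m) : -half m = half m := by
  rw [neg_eq_iff_add_eq_zero, half_add_half heven]

theorem eq_zero_or_half (hm : 0 < m) (heven : Even m) (x : ZMod m)
    (hx : x + x = 0) : x = 0 ∨ x = half m := by
  haveI : NeZero m := ⟨hm.ne'⟩
  obtain ⟨t, ht⟩ := heven
  have h2 : m / 2 = t := by omega
  have hv : x.val < m := ZMod.val_lt x
  have hcast : ((x.val : ℕ) : ZMod m) = x := ZMod.natCast_rightInverse x
  have : ((x.val + x.val : ℕ) : ZMod m) = 0 := by push_cast; rw [hcast]; exact hx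
  rw [ZMod.natCast_eq_zero_iff] at this
  have : x.val = 0 ∨ x.val = t := by
    rcases this with ⟨c, hc⟩
    have hc2 : m * c < m * 2 := by omega
    have : c < 2 := lt_of_mul_lt_mul_left hc2 (Nat.zero_le m)
    interval_cases c <;> omega
  rcases this with h | h
  · left; rw [← hcast, h, Nat.cast_zero]
  · right; rw [← hcast, h, half, h2]

theorem r_inv (i : ZMod m) : (r i : DihedralGroup m)⁻¹ = r (-i) := rfl

theorem sr_inv (i : ZMod m) : (sr i : DihedralGroup m)⁻¹ = sr i := rfl

theorem conj_r_r (k a : ZMod m) : r k * r a * (r k)⁻¹ = r a := by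
  rw [r_inv, r_mul_r, r_mul_r]; ring_nf

theorem conj_r_sr (k a : ZMod m) : r k * sr a * (r k)⁻¹ = sr (a - 2 * k) := by
  rw [r_inv, r_mul_sr, sr_mul_r]; ring_nf

theorem conj_sr_r (k a : ZMod m) : sr k * r a * (sr k)⁻¹ = r (-a) := by
  rw [sr_inv, sr_mul_r, sr_mul_sr]; ring_nf

theorem conj_sr_sr (k a : ZMod m) : sr k * sr a * (sr k)⁻¹ = sr (2 * k - a) := by
  rw [sr_inv, sr_mul_sr, r_mul_sr]; ring_nf

theorem commute_sr_cases (hm : 0 < m) (heven : Even m) {x : DihedralGroup m} {j : ZMod m}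
    (hx : Commute x (sr j)) :
    x = r 0 ∨ x = r (half m) ∨ x = sr j ∨ x = sr (j + half m) := by
  rcases x with k | k
  · rw [Commute, SemiconjBy, r_mul_sr, sr_mul_r, sr.injEq] at hx
    have : k + k = 0 := by linear_combination -hx
    rcases eq_zero_or_half hm heven k this with h | h
    · exact Or.inl (by rw [h])
    · exact Or.inr (Or.inl (by rw [h]))
  · rw [Commute, SemiconjBy, sr_mul_sr, sr_mul_sr, r.injEq] at hx
    have : (j - k) + (j - k) = 0 := by linear_combination hx
    rcases eq_zero_or_half hm heven _ this with h | h
    · refine Or.inr (Or.inr (Or.inl ?_))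
      have : k = j := by linear_combination -h
      rw [this]
    · refine Or.inr (Or.inr (Or.inr ?_))
      have : k = j + half m := by linear_combination -h + neg_half heven
      rw [this]

/-! ### The combinatorial model -/

abbrev Sub (m ℓ : ℕ) := {f : Fin ℓ → DihedralGroup m // ∀ i j, Commute (f i) (f j)}

abbrev Pat (ℓ : ℕ) := {ε : Fin ℓ → Fin 4 // ∃ i, ε i = 2 ∨ ε i = 3}

abbrev X (m ℓ : ℕ) := (Fin ℓ → ZMod m) ⊕ (ZMod 2 × Pat ℓ)

def swap4 : Fin 4 → Fin 4
  | ⟨0, _⟩ => 0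
  | ⟨1, _⟩ => 1
  | ⟨2, _⟩ => 3
  | ⟨3, _⟩ => 2
  | ⟨n + 4, h⟩ => absurd h (by omega)

theorem swap4_twice : ∀ e, swap4 (swap4 e) = e := by decide

theorem swap4_mem : ∀ e, (swap4 e = 2 ∨ swap4 e = 3) ↔ (e = 2 ∨ e = 3) := by decide

def sigma (m ℓ : ℕ) : X m ℓ → X m ℓ
  | .inl a => .inl (-a)
  | .inr (c, ε) => .inr (c + ((m / 2 : ℕ) : ZMod 2),
      ⟨fun i => swap4 (ε.1 i), by
        obtain ⟨i, hi⟩ := ε.2; exact ⟨i, (swap4_mem _).2 hi⟩⟩)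

theorem sigma_invol : ∀ x : X m ℓ, sigma m ℓ (sigma m ℓ x) = x := by
  rintro (a | ⟨c, ε⟩)
  · simp [sigma]
  · simp only [sigma, Sum.inr.injEq, Prod.mk.injEq]
    constructor
    · have : ∀ x : ZMod 2, x + x = 0 := by decide
      rw [add_assoc, this, add_zero]
    · exact Subtype.ext (funext fun i => swap4_twice _)

/-! ### Encoding and decoding -/

def dval (u : ZMod m) : Fin 4 → DihedralGroup m
  | ⟨0, _⟩ => r 0
  | ⟨1, _⟩ => r (half m)
  | ⟨2, _⟩ => sr u
  | ⟨3, _⟩ => sr (u + half m)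
  | ⟨n + 4, h⟩ => absurd h (by omega)

def code (u : ZMod m) (x : DihedralGroup m) : Fin 4 :=
  if x = r 0 then 0 else if x = r (half m) then 1 else if x = sr u then 2 else 3

theorem code_r0 (u : ZMod m) : code u (r 0) = 0 := by simp [code]

theorem code_rh (h0 : half m ≠ 0) (u : ZMod m) : code u (r (half m)) = 1 := by
  rw [code, if_neg (by simp [h0, -DihedralGroup.r_zero]), if_pos rfl]

theorem code_sr0 (u : ZMod m) : code u (sr u) = 2 := by
  rw [code, if_neg (by simp [-DihedralGroup.r_zero]), if_neg (by simp), if_pos rfl]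

theorem code_sr1 (h0 : half m ≠ 0) (u : ZMod m) : code u (sr (u + half m)) = 3 := by
  rw [code, if_neg (by simp [-DihedralGroup.r_zero]), if_neg (by simp), if_neg (by simp [h0])]

theorem code_dval (h0 : half m ≠ 0) (u : ZMod m) : ∀ e, code u (dval u e) = e := by
  intro e
  fin_cases e
  · exact code_r0 u
  · exact code_rh h0 u
  · exact code_sr0 u
  · exact code_sr1 h0 u

def isRefl : DihedralGroup m → Bool
  | .r _ => false
  | .sr _ => true

def idx : DihedralGroup m → ZMod m
  | .r j => j
  | .sr j => j

theorem isRefl_false {x : DihedralGroup m} (h : isRefl x = false) : x = r (idx x) := by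
  rcases x with j | j
  · rfl
  · exact absurd h (by simp [isRefl])

theorem isRefl_true {x : DihedralGroup m} (h : isRefl x = true) : x = sr (idx x) := by
  rcases x with j | j
  · exact absurd h (by simp [isRefl])
  · rfl

theorem isRefl_conj (g x : DihedralGroup m) : isRefl (g * x * g⁻¹) = isRefl x := by
  rcases g with k | k <;> rcases x with a | a
  · rw [conj_r_r]
  · rw [conj_r_sr]; rfl
  · rw [conj_sr_r]; rfl
  · rw [conj_sr_sr]; rfl

theorem isRefl_dval (u : ZMod m) : ∀ e, isRefl (dval u e) = true ↔ (e = 2 ∨ e = 3) := by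
  intro e
  fin_cases e <;> simp [dval, isRefl, -DihedralGroup.r_zero]

def minRefl (f : Sub m ℓ) (h : ∃ i, isRefl (f.1 i) = true) : Fin ℓ :=
  (Finset.univ.filter fun i => isRefl (f.1 i) = true).min'
    (by obtain ⟨i, hi⟩ := h; exact ⟨i, by simp [hi]⟩)

theorem minRefl_isRefl (f : Sub m ℓ) (h : ∃ i, isRefl (f.1 i) = true) :
    isRefl (f.1 (minRefl f h)) = true := by
  have := Finset.min'_mem (Finset.univ.filter fun i => isRefl (f.1 i) = true)
    (by obtain ⟨i, hi⟩ := h; exact ⟨i, by simp [hi]⟩)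
  simpa [minRefl] using this

theorem minRefl_congr (f f' : Sub m ℓ) (h' : ∃ i, isRefl (f'.1 i) = true)
    (h : ∃ i, isRefl (f.1 i) = true)
    (hsame : ∀ i, isRefl (f'.1 i) = isRefl (f.1 i)) : minRefl f' h' = minRefl f h := by
  apply le_antisymm
  · exact Finset.min'_le _ _ (by
      simp only [Finset.mem_filter, Finset.mem_univ, true_and, hsame]
      exact minRefl_isRefl f h)
  · exact Finset.min'_le _ _ (by
      simp only [Finset.mem_filter, Finset.mem_univ, true_and, ← hsame]
      exact minRefl_isRefl f' h')

def par (heven : Even m) (u : ZMod m) : ZMod 2 :=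
  ZMod.castHom heven.two_dvd (ZMod 2) u

theorem par_natCast (heven : Even m) (n : ℕ) : par heven ((n : ℕ) : ZMod m) = (n : ZMod 2) :=
  map_natCast _ n

theorem par_two (heven : Even m) : par heven (2 : ZMod m) = 0 := by
  have : ((2 : ℕ) : ZMod m) = (2 : ZMod m) := by push_cast; ring
  rw [← this, par_natCast]; decide

theorem par_sub_two_mul (heven : Even m) (u k : ZMod m) :
    par heven (u - 2 * k) = par heven u := by
  unfold par
  rw [map_sub, map_mul]
  rw [show (ZMod.castHom heven.two_dvd (ZMod 2)) 2 = 0 from par_two heven]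
  rw [zero_mul, sub_zero]

theorem par_two_mul_sub (heven : Even m) (u k : ZMod m) :
    par heven (2 * k - u) = par heven u := by
  unfold par
  rw [map_sub, map_mul]
  rw [show (ZMod.castHom heven.two_dvd (ZMod 2)) 2 = 0 from par_two heven]
  rw [zero_mul, zero_sub]
  exact (by decide : ∀ x : ZMod 2, -x = x) _

theorem par_val (heven : Even m) (c : ZMod 2) : par heven ((c.val : ℕ) : ZMod m) = c := by
  rw [par_natCast]; exact ZMod.natCast_rightInverse c

theorem par_half (heven : Even m) : par heven (half m) = ((m / 2 : ℕ) : ZMod 2) :=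
  par_natCast heven _

theorem par_add (heven : Even m) (u v : ZMod m) :
    par heven (u + v) = par heven u + par heven v := map_add _ u v

def enc (heven : Even m) (f : Sub m ℓ) : X m ℓ :=
  if h : ∃ i, isRefl (f.1 i) = true then
    Sum.inr (par heven (idx (f.1 (minRefl f h))),
      ⟨fun i => code (idx (f.1 (minRefl f h))) (f.1 i),
       ⟨minRefl f h, Or.inl (by
          show code (idx (f.1 (minRefl f h))) (f.1 (minRefl f h)) = 2
          obtain ⟨j, hj⟩ : ∃ j, f.1 (minRefl f h) = sr j :=
            ⟨_, isRefl_true (minRefl_isRefl f h)⟩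
          rw [hj]
          exact code_sr0 j)⟩⟩)
  else Sum.inl fun i => idx (f.1 i)

theorem dval_commute (heven : Even m) (u : ZMod m) (e1 e2 : Fin 4) :
    Commute (dval u e1) (dval u e2) := by
  have hh := half_add_half (m := m) heven
  fin_cases e1 <;> fin_cases e2 <;>
    simp only [dval, Commute, SemiconjBy, r_mul_r, r_mul_sr, sr_mul_r, sr_mul_sr] <;>
    congr 1 <;> (first | ring1 | linear_combination hh | linear_combination -hh)

def dec (hm : 0 < m) (heven : Even m) : X m ℓ → Sub m ℓ
  | .inl a => ⟨fun i => r (a i), fun i j => by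
      simp only [Commute, SemiconjBy, r_mul_r]; rw [add_comm]⟩
  | .inr (c, ε) => ⟨fun i => dval ((c.val : ℕ) : ZMod m) (ε.1 i),
      fun i j => dval_commute heven _ _ _⟩


theorem quot_mk_sigma (x : X m ℓ) :
    Quot.mk (fun x y => y = sigma m ℓ x) (sigma m ℓ x)
      = Quot.mk (fun x y => y = sigma m ℓ x) x :=
  (@Quot.sound (X m ℓ) (fun x y => y = sigma m ℓ x) x (sigma m ℓ x) rfl).symm

theorem dval_zero (u : ZMod m) : dval u 0 = r 0 := rfl
theorem dval_one (u : ZMod m) : dval u 1 = r (half m) := rfl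
theorem dval_two (u : ZMod m) : dval u 2 = sr u := rfl
theorem dval_three (u : ZMod m) : dval u 3 = sr (u + half m) := rfl

/-! ### Invariance of the encoding under conjugation -/

theorem enc_conj (hm : 0 < m) (heven : Even m) {f f' : Sub m ℓ}
    (hc : conjRel (DihedralGroup m) ℓ f f') :
    Quot.mk (fun x y => y = sigma m ℓ x) (enc heven f') =
    Quot.mk (fun x y => y = sigma m ℓ x) (enc heven f) := by
  obtain ⟨g, hg⟩ := hc
  have h0 := half_ne_zero hm heven
  have hh := half_add_half (m := m) heven
  have hsame : ∀ i, isRefl (f'.1 i) = isRefl (f.1 i) := fun i => by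
    rw [hg i, isRefl_conj]
  by_cases h : ∃ i, isRefl (f.1 i) = true
  · have h' : ∃ i, isRefl (f'.1 i) = true := by
      obtain ⟨i, hi⟩ := h; exact ⟨i, by rw [hsame i]; exact hi⟩
    have hmin : minRefl f' h' = minRefl f h := minRefl_congr f f' h' h hsame
    obtain ⟨u, hu⟩ : ∃ u, f.1 (minRefl f h) = sr u := ⟨_, isRefl_true (minRefl_isRefl f h)⟩
    have hfour : ∀ i, f.1 i = r 0 ∨ f.1 i = r (half m) ∨ f.1 i = sr u ∨
        f.1 i = sr (u + half m) :=
      fun i => commute_sr_cases hm heven (by rw [← hu]; exact f.2 i _)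
    have key : enc heven f' = enc heven f := by
      rw [enc, dif_pos h', enc, dif_pos h]
      rcases g with k | k
      · have hu' : f'.1 (minRefl f' h') = sr (u - 2 * k) := by
          rw [hmin, hg, hu, conj_r_sr]
        refine congrArg Sum.inr (Prod.ext ?_ (Subtype.ext (funext fun i => ?_)))
        · show par heven (idx (f'.1 (minRefl f' h'))) = par heven (idx (f.1 (minRefl f h)))
          rw [hu', hu]
          exact par_sub_two_mul heven u k
        · show code (idx (f'.1 (minRefl f' h'))) (f'.1 i) = code (idx (f.1 (minRefl f h))) (f.1 i)
          rw [hu', hu]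
          show code (u - 2 * k) (f'.1 i) = code u (f.1 i)
          rcases hfour i with h4 | h4 | h4 | h4 <;> rw [hg i, h4]
          · rw [conj_r_r, code_r0, code_r0]
          · rw [conj_r_r, code_rh h0, code_rh h0]
          · rw [conj_r_sr, code_sr0, code_sr0]
          · rw [conj_r_sr,
              show u + half m - 2 * k = (u - 2 * k) + half m from by ring,
              code_sr1 h0, code_sr1 h0]
      · have hu' : f'.1 (minRefl f' h') = sr (2 * k - u) := by
          rw [hmin, hg, hu, conj_sr_sr]
        refine congrArg Sum.inr (Prod.ext ?_ (Subtype.ext (funext fun i => ?_)))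
        · show par heven (idx (f'.1 (minRefl f' h'))) = par heven (idx (f.1 (minRefl f h)))
          rw [hu', hu]
          exact par_two_mul_sub heven u k
        · show code (idx (f'.1 (minRefl f' h'))) (f'.1 i) = code (idx (f.1 (minRefl f h))) (f.1 i)
          rw [hu', hu]
          show code (2 * k - u) (f'.1 i) = code u (f.1 i)
          rcases hfour i with h4 | h4 | h4 | h4 <;> rw [hg i, h4]
          · rw [conj_sr_r, neg_zero, code_r0, code_r0]
          · rw [conj_sr_r, neg_half heven, code_rh h0, code_rh h0]
          · rw [conj_sr_sr, code_sr0, code_sr0]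
          · rw [conj_sr_sr,
              show 2 * k - (u + half m) = (2 * k - u) + half m from by linear_combination -hh,
              code_sr1 h0, code_sr1 h0]
    rw [key]
  · have h' : ¬ ∃ i, isRefl (f'.1 i) = true := by
      rintro ⟨i, hi⟩; exact h ⟨i, by rw [← hsame i]; exact hi⟩
    have hval : ∀ i, ∃ a, f.1 i = r a := by
      intro i
      refine ⟨idx (f.1 i), isRefl_false ?_⟩
      cases hx : isRefl (f.1 i)
      · rfl
      · exact absurd ⟨i, hx⟩ h
    rw [enc, dif_neg h', enc, dif_neg h]
    rcases g with k | k
    · have : (fun i => idx (f'.1 i)) = fun i => idx (f.1 i) := by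
        funext i
        obtain ⟨a, ha⟩ := hval i
        rw [hg i, ha, conj_r_r]
      rw [this]
    · have : (Sum.inl (fun i => idx (f'.1 i)) : X m ℓ)
          = sigma m ℓ (Sum.inl fun i => idx (f.1 i)) := by
        show _ = Sum.inl _
        refine congrArg Sum.inl (funext fun i => ?_)
        show idx (f'.1 i) = -(idx (f.1 i))
        obtain ⟨a, ha⟩ := hval i
        rw [hg i, ha, conj_sr_r]
        rfl
      rw [this]
      exact quot_mk_sigma _

/-! ### Compatibility of decoding with the involution -/

theorem dec_sigma (hm : 0 < m) (heven : Even m) (x : X m ℓ) :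
    conjRel (DihedralGroup m) ℓ (dec hm heven x) (dec hm heven (sigma m ℓ x)) := by
  haveI : NeZero m := ⟨hm.ne'⟩
  have hh := half_add_half (m := m) heven
  rcases x with a | ⟨c, ε⟩
  · refine ⟨sr 0, fun i => ?_⟩
    show r ((-a) i) = sr 0 * r (a i) * (sr 0)⁻¹
    rw [conj_sr_r, Pi.neg_apply]
  · set u : ZMod m := ((c.val : ℕ) : ZMod m) with hudef
    set c' : ZMod 2 := c + ((m / 2 : ℕ) : ZMod 2) with hc'def
    set u' : ZMod m := ((c'.val : ℕ) : ZMod m) with hu'def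
    set d : ℕ := c.val + m / 2 with hddef
    have hval : c'.val = d % 2 := by
      rw [hc'def, ZMod.val_add, ZMod.val_natCast]
      omega
    have h2k : 2 * (((d / 2 : ℕ)) : ZMod m) = u + half m - u' := by
      have hd2 : 2 * (d / 2) = d - d % 2 := by omega
      calc (2 : ZMod m) * ((d / 2 : ℕ) : ZMod m)
          = ((2 * (d / 2) : ℕ) : ZMod m) := by push_cast; ring
        _ = ((d - d % 2 : ℕ) : ZMod m) := by rw [hd2]
        _ = ((d : ℕ) : ZMod m) - ((d % 2 : ℕ) : ZMod m) :=
            Nat.cast_sub (Nat.mod_le _ _)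
        _ = u + half m - u' := by
            have e1 : ((d : ℕ) : ZMod m) = u + half m := by
              rw [hddef]; push_cast; rfl
            have e2 : ((d % 2 : ℕ) : ZMod m) = u' := by rw [← hval]
            rw [e1, e2]
    set K : ZMod m := ((d / 2 : ℕ) : ZMod m) with hKdef
    refine ⟨r K, fun i => ?_⟩
    show dval u' (swap4 (ε.1 i)) = r K * dval u (ε.1 i) * (r K)⁻¹
    generalize ε.1 i = e
    fin_cases e
    · show r 0 = r K * r 0 * (r K)⁻¹
      rw [conj_r_r]
    · show r (half m) = r K * r (half m) * (r K)⁻¹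
      rw [conj_r_r]
    · show sr (u' + half m) = r K * sr u * (r K)⁻¹
      rw [conj_r_sr]; congr 1; linear_combination h2k + hh
    · show sr u' = r K * sr (u + half m) * (r K)⁻¹
      rw [conj_r_sr]; congr 1; linear_combination h2k

/-! ### Decoding inverts encoding -/

theorem dec_enc (hm : 0 < m) (heven : Even m) (f : Sub m ℓ) :
    Quot.mk (conjRel (DihedralGroup m) ℓ) (dec hm heven (enc heven f))
      = Quot.mk (conjRel (DihedralGroup m) ℓ) f := by
  haveI : NeZero m := ⟨hm.ne'⟩
  have h0 := half_ne_zero hm heven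
  by_cases h : ∃ i, isRefl (f.1 i) = true
  · rw [enc, dif_pos h]
    set u : ZMod m := idx (f.1 (minRefl f h)) with hu0
    have hu : f.1 (minRefl f h) = sr u := isRefl_true (minRefl_isRefl f h)
    set c := par heven u with hcdef
    set w : ZMod m := ((c.val : ℕ) : ZMod m) with hwdef
    have hfour : ∀ i, f.1 i = r 0 ∨ f.1 i = r (half m) ∨ f.1 i = sr u ∨
        f.1 i = sr (u + half m) :=
      fun i => commute_sr_cases hm heven (by rw [← hu]; exact f.2 i _)
    have hcval : c.val = u.val % 2 := by
      have hc2 : c = ((u.val : ℕ) : ZMod 2) := by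
        rw [hcdef]; unfold par
        rw [ZMod.castHom_apply, ← ZMod.natCast_val]
      rw [hc2, ZMod.val_natCast]
    have huval : ((u.val : ℕ) : ZMod m) = u := ZMod.natCast_rightInverse u
    have h2k : 2 * (-(((u.val / 2 : ℕ)) : ZMod m)) = w - u := by
      have hd2 : 2 * (u.val / 2) = u.val - u.val % 2 := by omega
      have : (2 : ZMod m) * ((u.val / 2 : ℕ) : ZMod m) = u - w := by
        calc (2 : ZMod m) * ((u.val / 2 : ℕ) : ZMod m)
            = ((2 * (u.val / 2) : ℕ) : ZMod m) := by push_cast; ring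
          _ = ((u.val - u.val % 2 : ℕ) : ZMod m) := by rw [hd2]
          _ = ((u.val : ℕ) : ZMod m) - ((u.val % 2 : ℕ) : ZMod m) :=
              Nat.cast_sub (Nat.mod_le _ _)
          _ = u - w := by rw [huval, hwdef, hcval]
      linear_combination -this
    apply Quot.sound
    refine ⟨r (-(((u.val / 2 : ℕ)) : ZMod m)), fun i => ?_⟩
    show f.1 i = r _ * dval w (code u (f.1 i)) * (r _)⁻¹
    rcases hfour i with h4 | h4 | h4 | h4 <;> rw [h4]
    · rw [code_r0, dval_zero, conj_r_r]
    · rw [code_rh h0, dval_one, conj_r_r]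
    · rw [code_sr0, dval_two, conj_r_sr]; congr 1; linear_combination h2k
    · rw [code_sr1 h0, dval_three, conj_r_sr]; congr 1; linear_combination h2k
  · rw [enc, dif_neg h]
    apply congrArg
    apply Subtype.ext
    funext i
    show r (idx (f.1 i)) = f.1 i
    refine (isRefl_false ?_).symm
    cases hx : isRefl (f.1 i)
    · rfl
    · exact absurd ⟨i, hx⟩ h

/-! ### Encoding inverts decoding -/

theorem enc_dec (hm : 0 < m) (heven : Even m) (x : X m ℓ) :
    Quot.mk (fun x y => y = sigma m ℓ x) (enc heven (dec hm heven x))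
      = Quot.mk (fun x y => y = sigma m ℓ x) x := by
  haveI : NeZero m := ⟨hm.ne'⟩
  have h0 := half_ne_zero hm heven
  have hh := half_add_half (m := m) heven
  rcases x with a | ⟨c, ε⟩
  · have h : ¬ ∃ i, isRefl ((dec hm heven (Sum.inl a : X m ℓ)).1 i) = true := by
      rintro ⟨i, hi⟩
      revert hi
      show isRefl (r (a i)) = true → False
      simp [isRefl]
    rw [enc, dif_neg h]
    rfl
  · set u : ZMod m := ((c.val : ℕ) : ZMod m) with hudef
    have h : ∃ i, isRefl ((dec hm heven (Sum.inr (c, ε) : X m ℓ)).1 i) = true := by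
      obtain ⟨i, hi⟩ := ε.2
      exact ⟨i, by show isRefl (dval u (ε.1 i)) = true; rw [isRefl_dval]; exact hi⟩
    have hri : isRefl (dval u (ε.1 (minRefl _ h))) = true := minRefl_isRefl _ h
    have he : ε.1 (minRefl _ h) = 2 ∨ ε.1 (minRefl _ h) = 3 := (isRefl_dval u _).mp hri
    have hpar : par heven u = c := par_val heven c
    rcases he with he | he
    · have hidx : idx ((dec hm heven (Sum.inr (c, ε) : X m ℓ)).1 (minRefl _ h)) = u := by
        show idx (dval u (ε.1 (minRefl _ h))) = u
        rw [he, dval_two]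
        rfl
      refine congrArg _ ?_
      show enc heven (dec hm heven (Sum.inr (c, ε) : X m ℓ)) = Sum.inr (c, ε)
      rw [enc, dif_pos h]
      refine congrArg Sum.inr (Prod.ext ?_ (Subtype.ext (funext fun i => ?_)))
      · show par heven (idx ((dec hm heven (Sum.inr (c, ε) : X m ℓ)).1 (minRefl _ h))) = c
        rw [hidx, hpar]
      · show code (idx ((dec hm heven (Sum.inr (c, ε) : X m ℓ)).1 (minRefl _ h)))
            ((dec hm heven (Sum.inr (c, ε) : X m ℓ)).1 i) = ε.1 i
        rw [hidx]
        show code u (dval u (ε.1 i)) = ε.1 i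
        exact code_dval h0 u _
    · have hidx : idx ((dec hm heven (Sum.inr (c, ε) : X m ℓ)).1 (minRefl _ h))
          = u + half m := by
        show idx (dval u (ε.1 (minRefl _ h))) = u + half m
        rw [he, dval_three]
        rfl
      have key : ∀ e : Fin 4, code (u + half m) (dval u e) = swap4 e := by
        intro e
        fin_cases e
        · show code (u + half m) (r 0) = 0
          exact code_r0 _
        · show code (u + half m) (r (half m)) = 1
          exact code_rh h0 _
        · show code (u + half m) (sr u) = 3
          rw [show sr u = sr ((u + half m) + half m) from by congr 1; linear_combination -hh]
          exact code_sr1 h0 _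
        · show code (u + half m) (sr (u + half m)) = 2
          exact code_sr0 _
      have main : enc heven (dec hm heven (Sum.inr (c, ε) : X m ℓ))
          = sigma m ℓ (Sum.inr (c, ε)) := by
        rw [enc, dif_pos h]
        refine congrArg Sum.inr (Prod.ext ?_ (Subtype.ext (funext fun i => ?_)))
        · show par heven (idx ((dec hm heven (Sum.inr (c, ε) : X m ℓ)).1 (minRefl _ h)))
              = c + ((m / 2 : ℕ) : ZMod 2)
          rw [hidx, par_add, hpar, par_half]
        · show code (idx ((dec hm heven (Sum.inr (c, ε) : X m ℓ)).1 (minRefl _ h)))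
              ((dec hm heven (Sum.inr (c, ε) : X m ℓ)).1 i) = swap4 (ε.1 i)
          rw [hidx]
          exact key _
      rw [main]
      exact quot_mk_sigma _


/-! ### Counting orbits of an involution -/

section Involution

variable {α : Type*} [Fintype α] [DecidableEq α]

def invSetoid (σ : α → α) (hσ : ∀ x, σ (σ x) = x) : Setoid α where
  r x y := y = x ∨ y = σ x
  iseqv := by
    refine ⟨fun x => Or.inl rfl, fun {x y} h => ?_, fun {x y z} h1 h2 => ?_⟩
    · rcases h with h | h
      · exact Or.inl h.symm
      · exact Or.inr (by rw [h, hσ])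
    · rcases h1 with h1 | h1 <;> rcases h2 with h2 | h2 <;> subst h2 <;> subst h1
      · exact Or.inl rfl
      · exact Or.inr rfl
      · exact Or.inr rfl
      · exact Or.inl (hσ x)

theorem two_mul_card_quot_involution (σ : α → α) (hσ : ∀ x, σ (σ x) = x) :
    2 * Nat.card (Quot (fun x y => y = σ x)) =
      Fintype.card α + Fintype.card {x : α // σ x = x} := by
  classical
  set S := invSetoid σ hσ with hS
  haveI : DecidableRel S.r := Classical.decRel _
  have e : Quot (fun x y => y = σ x) ≃ Quotient S := by
    refine ⟨Quot.lift (Quotient.mk S) (fun x y h => Quotient.sound (Or.inr h)),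
      Quotient.lift (Quot.mk _) (fun x y h => ?_), fun q => ?_, fun q => ?_⟩
    · rcases h with h | h
      · rw [h]
      · exact Quot.sound h
    · induction q using Quot.ind; rfl
    · induction q using Quotient.ind; rfl
  rw [Nat.card_congr e, Nat.card_eq_fintype_card]
  have hmk : ∀ x y : α, (Quotient.mk S x = Quotient.mk S y) ↔ (y = x ∨ y = σ x) :=
    fun x y => by rw [Quotient.eq]; exact Iff.rfl
  have key : ∀ q : Quotient S,
      (Finset.univ.filter fun x => Quotient.mk S x = q).card +
      (Finset.univ.filter fun x => σ x = x ∧ Quotient.mk S x = q).card = 2 := by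
    intro q
    induction q using Quotient.ind with
    | _ x₀ =>
    have hfiber : (Finset.univ.filter fun x => Quotient.mk S x = Quotient.mk S x₀)
        = {x₀, σ x₀} := by
      ext x
      simp only [Finset.mem_filter, Finset.mem_univ, true_and, Finset.mem_insert,
        Finset.mem_singleton, hmk]
      constructor
      · rintro (h | h)
        · exact Or.inl h.symm
        · exact Or.inr (by rw [h, hσ])
      · rintro (h | h)
        · exact Or.inl h.symm
        · exact Or.inr (by rw [h, hσ])
    by_cases hx : σ x₀ = x₀
    · have h1 : (Finset.univ.filter fun x => Quotient.mk S x = Quotient.mk S x₀) = {x₀} := by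
        rw [hfiber, hx]; simp
      have h2 : (Finset.univ.filter fun x => σ x = x ∧ Quotient.mk S x = Quotient.mk S x₀)
          = {x₀} := by
        ext x
        simp only [Finset.mem_filter, Finset.mem_univ, true_and, Finset.mem_singleton, hmk]
        constructor
        · rintro ⟨hfx, h | h⟩
          · exact h.symm
          · exact (h.trans hfx).symm
        · rintro rfl; exact ⟨hx, Or.inl rfl⟩
      rw [h1, h2]; simp
    · have h1 : (Finset.univ.filter fun x => Quotient.mk S x = Quotient.mk S x₀).card = 2 := by
        rw [hfiber, Finset.card_insert_of_notMem (by simpa using fun h => hx h.symm),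
          Finset.card_singleton]
      have h2 : (Finset.univ.filter fun x => σ x = x ∧ Quotient.mk S x = Quotient.mk S x₀)
          = ∅ := by
        ext x
        simp only [Finset.mem_filter, Finset.mem_univ, true_and, Finset.notMem_empty,
          iff_false, not_and, hmk]
        intro hfx
        rintro (rfl | h)
        · exact hx hfx
        · exact hx (by rw [h.trans hfx, hfx])
      rw [h1, h2]; simp
  have hA : Fintype.card α = ∑ q : Quotient S,
      (Finset.univ.filter fun x => Quotient.mk S x = q).card := by
    rw [← Finset.card_univ]
    exact Finset.card_eq_sum_card_fiberwise (fun x _ => Finset.mem_univ _)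
  have hB : Fintype.card {x : α // σ x = x} = ∑ q : Quotient S,
      (Finset.univ.filter fun x => σ x = x ∧ Quotient.mk S x = q).card := by
    rw [Fintype.card_subtype]
    rw [Finset.card_eq_sum_card_fiberwise
      (f := fun x => Quotient.mk S x) (t := Finset.univ) (fun x _ => Finset.mem_univ _)]
    congr 1; ext q; rw [Finset.filter_filter]
  rw [hA, hB, ← Finset.sum_add_distrib]
  simp only [key, Finset.sum_const, Finset.card_univ, smul_eq_mul]
  ring

end Involution

/-! ### The equivalence of quotients -/

def theEquiv (hm : 0 < m) (heven : Even m) :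
    Quot (conjRel (DihedralGroup m) ℓ) ≃ Quot (fun x y : X m ℓ => y = sigma m ℓ x) where
  toFun := Quot.lift (fun f => Quot.mk (fun x y : X m ℓ => y = sigma m ℓ x) (enc heven f))
    (fun _ _ hff' => (enc_conj hm heven hff').symm)
  invFun := Quot.lift (fun x => Quot.mk (conjRel (DihedralGroup m) ℓ) (dec hm heven x))
    (fun x y hxy => by subst hxy; exact Quot.sound (dec_sigma hm heven x))
  left_inv := by
    apply Quot.ind
    intro f
    exact dec_enc hm heven f
  right_inv := by
    apply Quot.ind
    intro x
    exact enc_dec hm heven x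

/-! ### Cardinalities -/

def padEquiv (ℓ : ℕ) :
    {ε : Fin ℓ → Fin 4 // ¬ ∃ i, ε i = 2 ∨ ε i = 3} ≃ (Fin ℓ → Fin 2) where
  toFun ε i := ⟨(ε.1 i).val, by
    have h := ε.2
    push_neg at h
    obtain ⟨h2, h3⟩ := h i
    have h4 := (ε.1 i).isLt
    have e2 : (ε.1 i).val ≠ 2 := fun hv => h2 (Fin.ext hv)
    have e3 : (ε.1 i).val ≠ 3 := fun hv => h3 (Fin.ext hv)
    omega⟩
  invFun g := ⟨fun i => ⟨(g i).val, by have := (g i).isLt; omega⟩, by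
    rintro ⟨i, hi | hi⟩ <;>
    · have hv := congrArg Fin.val hi
      have h2 := (g i).isLt
      simp only [Fin.val_mk] at hv
      omega⟩
  left_inv ε := Subtype.ext (funext fun i => Fin.ext rfl)
  right_inv g := funext fun i => Fin.ext rfl

theorem card_pat : Fintype.card (Pat ℓ) = 4 ^ ℓ - 2 ^ ℓ := by
  have h1 : Fintype.card {ε : Fin ℓ → Fin 4 // ¬ ∃ i, ε i = 2 ∨ ε i = 3} = 2 ^ ℓ := by
    rw [Fintype.card_congr (padEquiv ℓ), Fintype.card_fun, Fintype.card_fin, Fintype.card_fin]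
  have h2 := Fintype.card_subtype_compl (fun ε : Fin ℓ → Fin 4 => ∃ i, ε i = 2 ∨ ε i = 3)
  have h3 : Fintype.card (Pat ℓ) ≤ Fintype.card (Fin ℓ → Fin 4) := Fintype.card_subtype_le _
  have h4 : Fintype.card (Fin ℓ → Fin 4) = 4 ^ ℓ := by
    rw [Fintype.card_fun, Fintype.card_fin, Fintype.card_fin]
  rw [h4] at h2 h3
  rw [h1] at h2
  set x := Fintype.card (Pat ℓ) with hxd
  clear_value x
  clear hxd h1 h4
  omega

theorem card_X [NeZero m] : Fintype.card (X m ℓ) = m ^ ℓ + 2 * (4 ^ ℓ - 2 ^ ℓ) := by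
  rw [Fintype.card_sum, Fintype.card_prod, card_pat, Fintype.card_fun, Fintype.card_fin,
    ZMod.card, ZMod.card]

theorem card_neg_fixed [NeZero m] (hm : 0 < m) (heven : Even m) :
    Fintype.card {x : ZMod m // -x = x} = 2 := by
  have hiff : ∀ x : ZMod m, -x = x ↔ (x = 0 ∨ x = half m) := by
    intro x
    constructor
    · intro hx
      exact eq_zero_or_half hm heven x (by linear_combination -hx)
    · rintro (rfl | rfl)
      · exact neg_zero
      · exact neg_half heven
  rw [Fintype.card_subtype]
  have hset : Finset.univ.filter (fun x : ZMod m => -x = x) = {0, half m} := by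
    ext x
    simp [hiff x]
  rw [hset, Finset.card_pair (Ne.symm (half_ne_zero hm heven))]

theorem card_fix [NeZero m] (hm : 0 < m) (heven : Even m) :
    Fintype.card {x : X m ℓ // sigma m ℓ x = x} = 2 ^ ℓ := by
  have e1 : {a : Fin ℓ → ZMod m // -a = a} ≃ {x : X m ℓ // sigma m ℓ x = x} := by
    refine Equiv.ofBijective
      (fun a => ⟨Sum.inl a.1, by show (Sum.inl (-a.1) : X m ℓ) = Sum.inl a.1; rw [a.2]⟩)
      ⟨fun a b h => Subtype.ext (Sum.inl_injective (congrArg Subtype.val h)), ?_⟩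
    rintro ⟨x, hx⟩
    rcases x with a | ⟨c, ε⟩
    · exact ⟨⟨a, Sum.inl_injective (hx : (Sum.inl (-a) : X m ℓ) = Sum.inl a)⟩, rfl⟩
    · exfalso
      have h4 : (fun i => swap4 (ε.1 i)) = ε.1 :=
        congrArg (fun z : X m ℓ => match z with
          | Sum.inl _ => ε.1
          | Sum.inr p => p.2.1) hx
      obtain ⟨i, hi⟩ := ε.2
      have h5 := congrFun h4 i
      rcases hi with hi | hi <;> rw [hi] at h5 <;> exact absurd h5 (by decide)
  rw [← Fintype.card_congr e1]
  have e2 : {a : Fin ℓ → ZMod m // -a = a} ≃ ∀ _ : Fin ℓ, {x : ZMod m // -x = x} := by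
    refine (Equiv.subtypeEquivRight fun a => ?_).trans Equiv.subtypePiEquivPi
    constructor
    · intro h i
      rw [← Pi.neg_apply, h]
    · intro h
      funext i
      rw [Pi.neg_apply, h]
  rw [Fintype.card_congr e2, Fintype.card_pi]
  simp [card_neg_fixed hm heven]

end CTOD


/-- For `m` even and positive, the number of conjugation orbits of commuting `ℓ`-tuples of
elements of the dihedral group `D_{2m}` equals `(m^ℓ + 2^ℓ(2^(ℓ+1) - 1))/2`. -/
theorem card_commuting_tuples_orbits_dihedral_even (m : ℕ) (hm : 0 < m) (heven : Even m)
    (ℓ : ℕ) (hℓ : 1 ≤ ℓ) :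
    2 * Nat.card (Quot (conjRel (DihedralGroup m) ℓ)) = m ^ ℓ + 2 ^ ℓ * (2 ^ (ℓ + 1) - 1) := by
  haveI : NeZero m := ⟨hm.ne'⟩
  rw [Nat.card_congr (CTOD.theEquiv (m := m) (ℓ := ℓ) hm heven)]
  rw [CTOD.two_mul_card_quot_involution (CTOD.sigma m ℓ) CTOD.sigma_invol]
  rw [CTOD.card_X, CTOD.card_fix hm heven]
  have h1 : 2 ^ ℓ ≤ 4 ^ ℓ := Nat.pow_le_pow_left (by norm_num) ℓ
  have h2 : 1 ≤ 2 ^ (ℓ + 1) := Nat.one_le_two_pow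
  zify [h1, h2]
  have q1 : (4 : ℤ) ^ ℓ = 2 ^ ℓ * 2 ^ ℓ := by
    rw [show (4 : ℤ) = 2 * 2 from by norm_num, mul_pow]
  have q2 : (2 : ℤ) ^ (ℓ + 1) = 2 * 2 ^ ℓ := by rw [pow_succ]; ring
  rw [q1, q2]
  ring
end

section
/- Let V₁ and V₂ be finite-dimensional unitary representations of S^1 with weight vectors a = (a_1,…,a_n) and b = (b_1,…,b_m). If for Γ = ℤ^ℓ the equality χ_Γ(S^1 ⋉ V₁) = χ_Γ(S^1 ⋉ V₂) holds for all ℓ = 1,…,max(n,m) — equivalently, if Σ_i |a_i|^ℓ = Σ_j |b_j|^ℓ for ℓ = 1,…,max(n,m) and n = m — then the multisets {|a_1|,…,|a_n|} and {|b_1|,…,|b_m|} coincide. -/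
open MvPolynomial Finset

/-- Power sums `p_1, …, p_n` determine a multiset of `n` elements of `ℚ`. -/
lemma multiset_eq_of_power_sums (n : ℕ) (A B : Fin n → ℚ)
    (h : ∀ ℓ : ℕ, 1 ≤ ℓ → ℓ ≤ n → ∑ i, A i ^ ℓ = ∑ i, B i ^ ℓ) :
    (Finset.univ.val.map A) = (Finset.univ.val.map B) := by
  classical
  have hpsum : ∀ ℓ : ℕ, 1 ≤ ℓ → ℓ ≤ n →
      aeval A (psum (Fin n) ℚ ℓ) = aeval B (psum (Fin n) ℚ ℓ) := by
    intro ℓ h1 h2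
    simpa [MvPolynomial.psum, map_sum] using h ℓ h1 h2
  have hesymm : ∀ k : ℕ, k ≤ n →
      aeval A (esymm (Fin n) ℚ k) = aeval B (esymm (Fin n) ℚ k) := by
    intro k
    induction k using Nat.strong_induction_on with
    | _ k ih =>
      intro hk
      rcases Nat.eq_zero_or_pos k with rfl | hkpos
      · simp
      · have hA := congrArg (aeval A) (MvPolynomial.mul_esymm_eq_sum (Fin n) ℚ k)
        have hB := congrArg (aeval B) (MvPolynomial.mul_esymm_eq_sum (Fin n) ℚ k)
        simp only [map_mul, map_pow, map_natCast, map_neg, map_one, map_sum] at hA hB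
        have hsum : (∑ p ∈ Finset.HasAntidiagonal.antidiagonal k with p.1 < k,
              aeval A ((-1 : MvPolynomial (Fin n) ℚ) ^ p.1 * esymm (Fin n) ℚ p.1 *
                psum (Fin n) ℚ p.2)) =
            ∑ p ∈ Finset.HasAntidiagonal.antidiagonal k with p.1 < k,
              aeval B ((-1 : MvPolynomial (Fin n) ℚ) ^ p.1 * esymm (Fin n) ℚ p.1 *
                psum (Fin n) ℚ p.2) := by
          apply Finset.sum_congr rfl
          intro p hp
          simp only [Finset.mem_filter, Finset.HasAntidiagonal.mem_antidiagonal] at hp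
          obtain ⟨hpk, hp1⟩ := hp
          have h2pos : 1 ≤ p.2 := by omega
          have h2le : p.2 ≤ n := by omega
          have he := ih p.1 hp1 (by omega)
          have hps := hpsum p.2 h2pos h2le
          simp only [map_mul, map_pow, map_neg, map_one, he, hps]
        have hk0 : (k : ℚ) ≠ 0 := by exact_mod_cast hkpos.ne'
        have : (k : ℚ) * aeval A (esymm (Fin n) ℚ k) =
            (k : ℚ) * aeval B (esymm (Fin n) ℚ k) := by
          rw [hA, hB]
          congr 1
          simpa [map_mul, map_pow, map_neg, map_one, map_sum] using hsum
        exact mul_left_cancel₀ hk0 this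
  -- translate to multiset esymm
  set s : Multiset ℚ := Finset.univ.val.map A with hs
  set t : Multiset ℚ := Finset.univ.val.map B with ht
  have hcards : Multiset.card s = n := by simp [hs]
  have hcardt : Multiset.card t = n := by simp [ht]
  have hes : ∀ k ≤ n, s.esymm k = t.esymm k := by
    intro k hk
    have h1 := MvPolynomial.aeval_esymm_eq_multiset_esymm (Fin n) ℚ k A
    have h2 := MvPolynomial.aeval_esymm_eq_multiset_esymm (Fin n) ℚ k B
    rw [← hs] at h1
    rw [← ht] at h2
    rw [← h1, ← h2]
    exact hesymm k hk
  have hprod : (s.map fun r => Polynomial.X - Polynomial.C r).prod = (t.map fun r => Polynomial.X - Polynomial.C r).prod := by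
    rw [Multiset.prod_X_sub_X_eq_sum_esymm, Multiset.prod_X_sub_X_eq_sum_esymm,
      hcards, hcardt]
    apply Finset.sum_congr rfl
    intro j hj
    rw [Finset.mem_range] at hj
    rw [hes j (by omega)]
  have := congrArg Polynomial.roots hprod
  rwa [Polynomial.roots_multiset_prod_X_sub_C, Polynomial.roots_multiset_prod_X_sub_C] at this

/-- If two unitary `S¹`-representations with weight vectors `a : Fin n → ℤ`, `b : Fin m → ℤ`
have the same `χ_{ℤ^ℓ}` for `ℓ = 1, …, max n m` — equivalently, `n = m` and
`Σ_i |a_i|^ℓ = Σ_j |b_j|^ℓ` for those `ℓ` — then the multisets `{|a_1|, …, |a_n|}` and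
`{|b_1|, …, |b_m|}` coincide. -/
theorem weights_determined_by_power_sums (n m : ℕ) (a : Fin n → ℤ) (b : Fin m → ℤ)
    (hnm : n = m)
    (h : ∀ ℓ : ℕ, 1 ≤ ℓ → ℓ ≤ max n m →
      ∑ i, ((a i).natAbs : ℤ) ^ ℓ = ∑ j, ((b j).natAbs : ℤ) ^ ℓ) :
    (Finset.univ.val.map fun i => (a i).natAbs) =
      (Finset.univ.val.map fun j => (b j).natAbs) := by
  subst hnm
  have key := multiset_eq_of_power_sums n (fun i => ((a i).natAbs : ℚ))
    (fun i => ((b i).natAbs : ℚ)) (by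
      intro ℓ h1 h2
      have := h ℓ h1 (by simpa using h2)
      show ∑ i : Fin n, ((a i).natAbs : ℚ) ^ ℓ = ∑ i : Fin n, ((b i).natAbs : ℚ) ^ ℓ
      exact_mod_cast this)
  have hinj : Function.Injective ((↑) : ℕ → ℚ) := Nat.cast_injective
  apply Multiset.map_injective hinj
  simpa [Multiset.map_map, Function.comp_def] using key
end
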